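/- Let c > 0, a ∈ ℝ, and let f : [a, ∞) → ℝ be continuous on [a, ∞) and twice differentiable on (a, ∞), with f(a) ≤ 0, f(x) → 0 as x → +∞, and f''(x) ≥ c² f(x) for all x > a. Then f(x) ≤ 0 for all x ≥ a. -/
import Mathlib


open Filter Topology Set

/-- Comparison principle: if `f` is continuous on `[a,∞)`, twice differentiable on `(a,∞)`,
with `f(a) ≤ 0`, `f(x) → 0` as `x → ∞` and `f'' ≥ c² f` on `(a,∞)` for some `c > 0`,
then `f ≤ 0` on `[a,∞)`. -/
theorem comparison_principle (c a : ℝ) (hc : 0 < c) (f f' f'' : ℝ → ℝ)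
    (hcont : ContinuousOn f (Ici a))
    (hder1 : ∀ x, a < x → HasDerivAt f (f' x) x)
    (hder2 : ∀ x, a < x → HasDerivAt f' (f'' x) x)
    (hfa : f a ≤ 0)
    (hlim : Tendsto f atTop (𝓝 0))
    (hineq : ∀ x, a < x → c ^ 2 * f x ≤ f'' x) :
    ∀ x, a ≤ x → f x ≤ 0 := by
  by_contra h
  push_neg at h
  obtain ⟨x₀, hx₀a, hx₀⟩ := h
  have hev : ∀ᶠ x in atTop, f x < f x₀ := hlim.eventually (eventually_lt_nhds hx₀)
  obtain ⟨b, hb⟩ := eventually_atTop.mp hev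
  set B := max b x₀ with hBdef
  have hbB : b ≤ B := le_max_left _ _
  have hx₀B : x₀ ≤ B := le_max_right _ _
  have haB : a ≤ B := hx₀a.trans hx₀B
  have hcont' : ContinuousOn f (Icc a B) := hcont.mono Icc_subset_Ici_self
  obtain ⟨m, hmIcc, hmax⟩ := isCompact_Icc.exists_isMaxOn ⟨x₀, hx₀a, hx₀B⟩ hcont'
  have hfm : 0 < f m := hx₀.trans_le (hmax ⟨hx₀a, hx₀B⟩)
  have ham : a < m := by
    rcases eq_or_lt_of_le hmIcc.1 with h | h
    · exfalso; rw [← h] at hfm; linarith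
    · exact h
  have hglob : ∀ y, a ≤ y → f y ≤ f m := by
    intro y hy
    by_cases hyB : y ≤ B
    · exact hmax ⟨hy, hyB⟩
    · have : f y < f x₀ := hb y (hbB.trans (le_of_not_ge hyB))
      exact this.le.trans (hmax ⟨hx₀a, hx₀B⟩)
  have hlocmax : IsLocalMax f m := by
    filter_upwards [Ici_mem_nhds ham] with y hy using hglob y hy
  have hf'0 : f' m = 0 := hlocmax.hasDerivAt_eq_zero (hder1 m ham)
  have hf'' : 0 < f'' m := lt_of_lt_of_le (by positivity) (hineq m ham)
  have hslope : Tendsto (slope f' m) (𝓝[≠] m) (𝓝 (f'' m)) :=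
    hasDerivAt_iff_tendsto_slope.mp (hder2 m ham)
  have hevp : ∀ᶠ x in 𝓝[>] m, 0 < slope f' m x :=
    (hslope.eventually (eventually_gt_nhds hf'')).filter_mono
      (nhdsWithin_mono m (fun x hx => ne_of_gt hx))
  obtain ⟨u, hu, hsub⟩ := mem_nhdsGT_iff_exists_Ioo_subset.mp hevp
  have hf'pos : ∀ x ∈ Ioo m u, 0 < f' x := by
    intro x hx
    have h1 : 0 < slope f' m x := hsub hx
    rw [slope_def_field, hf'0, sub_zero] at h1
    have hx' : 0 < x - m := sub_pos.mpr hx.1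
    have := mul_pos h1 hx'
    rwa [div_mul_cancel₀ _ (ne_of_gt hx')] at this
  set t := (m + u) / 2 with ht
  have hmu : m < u := hu
  have hmt : m < t := by simp only [ht]; linarith
  have htu : t < u := by simp only [ht]; linarith
  have hmono : StrictMonoOn f (Icc m t) := by
    apply strictMonoOn_of_deriv_pos (convex_Icc m t)
      (hcont.mono (fun y hy => ham.le.trans hy.1))
    intro x hx
    rw [interior_Icc] at hx
    rw [(hder1 x (ham.trans hx.1)).deriv]
    exact hf'pos x ⟨hx.1, hx.2.trans htu⟩
  have h1 : f m < f t := hmono (left_mem_Icc.mpr hmt.le) (right_mem_Icc.mpr hmt.le) hmt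
  have h2 : f t ≤ f m := hglob t (ham.le.trans hmt.le)
  linarith
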